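/- Let L > 0, let λ be the normalized Lebesgue measure on [0,L], let μ be the probability measure on [0,π] with μ(B) = (1/2)∫_B sin(θ) dθ, and let F : [0,L] × [0,π] → [0,L] × [0,π] be a measurable map preserving λ × μ, written F(s,θ) = (s_1(s,θ), θ_1(s,θ)). Then λ × μ is invariant for the random billiard map F̄(s,θ) = (s_1(s,θ), T_i(θ_1(s,θ))) applied with probability p_i(θ_1(s,θ)): for every Borel set E ⊆ [0,L] × [0,π], (λ×μ)(E) = Σ_{i=1}^4 ∬ 1_E(s_1(s,θ), T_i(θ_1(s,θ))) p_i(θ_1(s,θ)) dλ(s) dμ(θ). -/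

import Mathlib

open Real MeasureTheory Set Filter Topology
open scoped ENNReal NNReal

noncomputable section

namespace RandomBilliard

/-- The four maps `T_1, …, T_4` of the Feres random map
(index `i : Fin 4` stands for `T_{i+1}`). -/
def T (α : ℝ) : Fin 4 → ℝ → ℝ
  | 0 => fun θ => θ + 2 * α
  | 1 => fun θ => -θ + 2 * π - 4 * α
  | 2 => fun θ => θ - 2 * α
  | 3 => fun θ => -θ + 4 * α

/-- `u_a(θ) = (1/2)(1 + tan a / tan θ)`. -/
def u (a θ : ℝ) : ℝ := 1 / 2 * (1 + Real.tan a / Real.tan θ)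

/-- The probabilities `p_1, …, p_4` of the Feres random map
(index `i : Fin 4` stands for `p_{i+1}`). -/
def p (α : ℝ) : Fin 4 → ℝ → ℝ
  | 0 => fun θ =>
      if θ < α then 1
      else if θ < π - 3 * α then u α θ
      else if θ < π - 2 * α then 2 * Real.cos (2 * α) * u (2 * α) θ
      else 0
  | 1 => fun θ =>
      if θ < π - 3 * α then 0
      else if θ < π - 2 * α then u α θ - 2 * Real.cos (2 * α) * u (2 * α) θ
      else if θ < π - α then u α θ
      else 0
  | 2 => fun θ =>
      if θ < 2 * α then 0
      else if θ < 3 * α then 2 * Real.cos (2 * α) * u (2 * α) (-θ)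
      else if θ < π - α then u α (-θ)
      else 1
  | 3 => fun θ =>
      if θ < α then 0
      else if θ < 2 * α then u α (-θ)
      else if θ < 3 * α then u α (-θ) - 2 * Real.cos (2 * α) * u (2 * α) (-θ)
      else 0

/-- `iterT α x k θ = T_x^{(k)}(θ) = T_{x_k} ∘ ⋯ ∘ T_{x_1}(θ)`
(the term `x j : Fin 4` stands for the symbol `x_{j+1}`). -/
def iterT (α : ℝ) (x : ℕ → Fin 4) : ℕ → ℝ → ℝ
  | 0 => fun θ => θ
  | k + 1 => fun θ => T α (x k) (iterT α x k θ)

/-- `Σ_θ`: the admissible symbol sequences for `θ`, i.e. those whose every finite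
prefix has positive probability. -/
def SigmaTheta (α θ : ℝ) : Set (ℕ → Fin 4) :=
  {x | ∀ k : ℕ, 0 < ∏ j ∈ Finset.range k, p α (x j) (iterT α x j θ)}

/-- `C(θ)`: all possible future images of `θ` under the Feres random map. -/
def Cset (α θ : ℝ) : Set ℝ :=
  {θ' | θ' ∈ Set.Ioo 0 π ∧
    ∃ (x : ℕ → Fin 4) (k : ℕ), x ∈ SigmaTheta α θ ∧ iterT α x k θ = θ'}

/-- The probability measure `μ(A) = (1/2) ∫_A sin θ dθ` on `[0, π]`. -/
def mu0 : Measure ℝ :=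
  (volume.restrict (Set.Icc 0 π)).withDensity fun θ => ENNReal.ofReal (1 / 2 * Real.sin θ)

/-- One step of the evolution of a measure under the Feres random map:
`(stepMeasure α ν)(A) = ∫ K(θ, A) dν(θ)`, where `K(θ, A) = Σ_i p_i(θ) 1_A(T_i θ)`. -/
def stepMeasure (α : ℝ) (ν : Measure ℝ) : Measure ℝ :=
  ∑ i : Fin 4, Measure.map (T α i) (ν.withDensity fun θ => ENNReal.ofReal (p α i θ))

/-- One step of the evolution of a measure under the random billiard map in the circle
`F̄(s, θ) = (s + 2 T_i(θ) mod 2π, T_i(θ))` with probability `p_i(θ)`. -/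
def circleStep (α : ℝ) (ν : Measure (ℝ × ℝ)) : Measure (ℝ × ℝ) :=
  ∑ i : Fin 4,
    Measure.map
      (fun q : ℝ × ℝ => (toIcoMod Real.two_pi_pos 0 (q.1 + 2 * T α i q.2), T α i q.2))
      (ν.withDensity fun q => ENNReal.ofReal (p α i q.2))

/-- The transition kernel `K(θ', ·) = Σ_i p_i(θ') δ_{T_i(θ')}` of the Feres random map. -/
def feresKernel (α : ℝ) (t : ℝ) : Measure ℝ :=
  ∑ i : Fin 4, ENNReal.ofReal (p α i t) • Measure.dirac (T α i t)

/-- `k`-step iterates of a transition kernel. -/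
def kerIterate (κ : ℝ → Measure ℝ) : ℕ → ℝ → Measure ℝ
  | 0 => fun t => Measure.dirac t
  | k + 1 => fun t => (κ t).bind (kerIterate κ k)

/-- The probability that a Markov chain with kernel `κ` started at `t` satisfies
`θ_0 ∈ B 0, …, θ_n ∈ B n`. -/
def cylProb (κ : ℝ → Measure ℝ) : ℕ → (ℕ → Set ℝ) → ℝ → ℝ≥0∞
  | 0 => fun B t => Set.indicator (B 0) (fun _ => (1 : ℝ≥0∞)) t
  | n + 1 => fun B t =>
      Set.indicator (B 0)
        (fun _ => ∫⁻ t', cylProb κ n (fun k => B (k + 1)) t' ∂(κ t)) t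

/-- `ν` is the Markov path measure on `ℕ → ℝ` (given by the Ionescu–Tulcea construction)
with initial distribution `ρ` and transition kernel `κ`, characterized by its values
on cylinder sets. -/
def IsMarkovPathMeasure (κ : ℝ → Measure ℝ) (ρ : Measure ℝ) (ν : Measure (ℕ → ℝ)) : Prop :=
  ∀ (n : ℕ) (B : ℕ → Set ℝ), (∀ k, MeasurableSet (B k)) →
    ν {ω | ∀ k ≤ n, ω k ∈ B k} = ∫⁻ t, cylProb κ n B t ∂ρ

/-- The shift map on sequences. -/
def shift : (ℕ → ℝ) → ℕ → ℝ := fun ω n => ω (n + 1)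

/-- Aperiodicity of the Markov chain with kernel `κ` on the state space `S`:
for every state, every common divisor of the return times having positive
probability equals `1` (i.e. every state has period 1). -/
def AperiodicChain (κ : ℝ → Measure ℝ) (S : Set ℝ) : Prop :=
  ∀ t ∈ S, ∀ d : ℕ, (∀ k : ℕ, 1 ≤ k → 0 < kerIterate κ k t {t} → d ∣ k) → d = 1

end RandomBilliard

namespace RandomBilliard

/-! ### auxiliary trig lemmas -/

lemma sin_div_tan (θ : ℝ) (hθ : Real.sin θ ≠ 0) : Real.sin θ / Real.tan θ = Real.cos θ := by
  rcases eq_or_ne (Real.cos θ) 0 with hc | hc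
  · simp [Real.tan_eq_sin_div_cos, hc]
  · rw [Real.tan_eq_sin_div_cos]; field_simp

lemma u_mul_sin {a θ : ℝ} (ha : Real.cos a ≠ 0) (hθ : Real.sin θ ≠ 0) :
    u a θ * Real.sin θ = Real.sin (θ + a) / (2 * Real.cos a) := by
  have h : Real.tan a / Real.tan θ * Real.sin θ = Real.tan a * Real.cos θ := by
    rw [div_mul_eq_mul_div, mul_div_assoc, sin_div_tan θ hθ]
  have h2 : u a θ * Real.sin θ = 1/2 * Real.sin θ + 1/2 * (Real.tan a * Real.cos θ) := by
    rw [u, ← h]; ring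
  rw [h2, Real.sin_add, Real.tan_eq_sin_div_cos]
  field_simp

lemma u_neg_mul_sin {a θ : ℝ} (ha : Real.cos a ≠ 0) (hθ : Real.sin θ ≠ 0) :
    u a (-θ) * Real.sin θ = Real.sin (θ - a) / (2 * Real.cos a) := by
  have h : u a (-θ) * Real.sin (-θ) = Real.sin (-θ + a) / (2 * Real.cos a) :=
    u_mul_sin ha (by simpa using hθ)
  rw [Real.sin_neg, show -θ + a = -(θ - a) by ring, Real.sin_neg] at h
  have h' := h
  field_simp at h' ⊢
  linarith [h']

lemma two_cos_u_mul_sin {α θ : ℝ} (hc : Real.cos (2*α) ≠ 0) (hθ : Real.sin θ ≠ 0) :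
    (2 * Real.cos (2*α) * u (2*α) θ) * Real.sin θ = Real.sin (θ + 2*α) := by
  have := u_mul_sin hc hθ
  field_simp at this ⊢
  nlinarith [this]

lemma two_cos_u_neg_mul_sin {α θ : ℝ} (hc : Real.cos (2*α) ≠ 0) (hθ : Real.sin θ ≠ 0) :
    (2 * Real.cos (2*α) * u (2*α) (-θ)) * Real.sin θ = Real.sin (θ - 2*α) := by
  have := u_neg_mul_sin hc hθ
  field_simp at this ⊢
  nlinarith [this]

lemma sin_comb_add (a x : ℝ) : Real.sin (x+a) - 2*Real.cos a * Real.sin (x+2*a) = -Real.sin (x+3*a) := by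
  rw [show (3:ℝ)*a = a+a+a by ring, show (2:ℝ)*a = a+a by ring]
  simp only [Real.sin_add, Real.cos_add]
  linear_combination (-(Real.sin x * Real.cos a + Real.cos x * Real.sin a)) * Real.sin_sq_add_cos_sq a

lemma sin_comb_sub (a x : ℝ) : Real.sin (x-a) - 2*Real.cos a * Real.sin (x-2*a) = -Real.sin (x-3*a) := by
  rw [show (3:ℝ)*a = a+a+a by ring, show (2:ℝ)*a = a+a by ring]
  simp only [Real.sin_add, Real.cos_add, Real.sin_sub, Real.cos_sub]
  linear_combination (-(Real.sin x * Real.cos a - Real.cos x * Real.sin a)) * Real.sin_sq_add_cos_sq a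

lemma comb_mul_sin {α θ : ℝ} (ha : Real.cos α ≠ 0) (hc : Real.cos (2*α) ≠ 0)
    (hθ : Real.sin θ ≠ 0) :
    (u α θ - 2 * Real.cos (2*α) * u (2*α) θ) * Real.sin θ
      = -Real.sin (θ + 3*α) / (2 * Real.cos α) := by
  have h1 : (u α θ - 2 * Real.cos (2*α) * u (2*α) θ) * Real.sin θ
      = Real.sin (θ + α) / (2 * Real.cos α) - Real.sin (θ + 2*α) := by
    rw [sub_mul, u_mul_sin ha hθ, two_cos_u_mul_sin hc hθ]
  rw [h1, ← sin_comb_add α θ]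
  field_simp

lemma comb_neg_mul_sin {α θ : ℝ} (ha : Real.cos α ≠ 0) (hc : Real.cos (2*α) ≠ 0)
    (hθ : Real.sin θ ≠ 0) :
    (u α (-θ) - 2 * Real.cos (2*α) * u (2*α) (-θ)) * Real.sin θ
      = -Real.sin (θ - 3*α) / (2 * Real.cos α) := by
  have h1 : (u α (-θ) - 2 * Real.cos (2*α) * u (2*α) (-θ)) * Real.sin θ
      = Real.sin (θ - α) / (2 * Real.cos α) - Real.sin (θ - 2*α) := by
    rw [sub_mul, u_neg_mul_sin ha hθ, two_cos_u_neg_mul_sin hc hθ]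
  rw [h1, ← sin_comb_sub α θ]
  field_simp

/-! ### the inverse maps and the pushforward densities -/

def Tinv (α : ℝ) : Fin 4 → ℝ → ℝ
  | 0 => fun t => t - 2 * α
  | 1 => fun t => -t + 2 * π - 4 * α
  | 2 => fun t => t + 2 * α
  | 3 => fun t => -t + 4 * α

def d (α : ℝ) (i : Fin 4) (t : ℝ) : ℝ :=
  if Tinv α i t ∈ Set.Icc 0 π then 1 / 2 * Real.sin (Tinv α i t) * p α i (Tinv α i t) else 0

lemma p0_def (α t : ℝ) : p α 0 t = if t < α then 1 else if t < π - 3 * α then u α t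
    else if t < π - 2 * α then 2 * Real.cos (2 * α) * u (2 * α) t else 0 := rfl
lemma p1_def (α t : ℝ) : p α 1 t = if t < π - 3 * α then 0
    else if t < π - 2 * α then u α t - 2 * Real.cos (2 * α) * u (2 * α) t
    else if t < π - α then u α t else 0 := rfl
lemma p2_def (α t : ℝ) : p α 2 t = if t < 2 * α then 0
    else if t < 3 * α then 2 * Real.cos (2 * α) * u (2 * α) (-t)
    else if t < π - α then u α (-t) else 1 := rfl
lemma p3_def (α t : ℝ) : p α 3 t = if t < α then 0 else if t < 2 * α then u α (-t)
    else if t < 3 * α then u α (-t) - 2 * Real.cos (2 * α) * u (2 * α) (-t) else 0 := rfl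

lemma Tinv0_def (α t : ℝ) : Tinv α 0 t = t - 2 * α := rfl
lemma Tinv1_def (α t : ℝ) : Tinv α 1 t = -t + 2 * π - 4 * α := rfl
lemma Tinv2_def (α t : ℝ) : Tinv α 2 t = t + 2 * α := rfl
lemma Tinv3_def (α t : ℝ) : Tinv α 3 t = -t + 4 * α := rfl

lemma d_of_not_mem {α : ℝ} {i : Fin 4} {t : ℝ} (h : Tinv α i t ∉ Set.Icc 0 π) :
    d α i t = 0 := if_neg h
lemma d_of_mem {α : ℝ} {i : Fin 4} {t : ℝ} (h : Tinv α i t ∈ Set.Icc 0 π) :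
    d α i t = 1 / 2 * Real.sin (Tinv α i t) * p α i (Tinv α i t) := if_pos h
lemma d_of_p_zero {α : ℝ} {i : Fin 4} {t : ℝ} (h : p α i (Tinv α i t) = 0) :
    d α i t = 0 := by
  rw [d]; split_ifs with hm
  · rw [h, mul_zero]
  · rfl


/-! ### the regional trig identities -/

lemma idI3a {a t : ℝ} (ha : Real.cos a ≠ 0) :
    Real.sin (t+a) / (4 * Real.cos a) + Real.sin (t-a) / (4 * Real.cos a) = 1/2 * Real.sin t := by
  rw [Real.sin_add, Real.sin_sub]
  field_simp
  ring

lemma idI3b {a t : ℝ} (ha : Real.cos a ≠ 0) :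
    Real.sin (t-a) / (4 * Real.cos a) + Real.sin (t+a) / (4 * Real.cos a) = 1/2 * Real.sin t := by
  rw [add_comm]; exact idI3a ha

lemma idI2 {a t : ℝ} (ha : Real.cos a ≠ 0) :
    1/2 * Real.sin (t - 2*a) + Real.sin (t+a) / (4*Real.cos a)
      + Real.sin (3*a - t) / (4*Real.cos a) = 1/2 * Real.sin t := by
  have key : 2 * Real.cos a * Real.sin (t - 2*a) + (Real.sin (t+a) + Real.sin (3*a - t))
      = 2 * Real.cos a * Real.sin t := by
    rw [show (3:ℝ)*a = a+a+a by ring, show (2:ℝ)*a = a+a by ring]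
    simp only [Real.sin_add, Real.cos_add, Real.sin_sub, Real.cos_sub]
    linear_combination (Real.cos a * Real.sin t - Real.sin a * Real.cos t) * Real.sin_sq_add_cos_sq a
  have h4 : (4:ℝ) * Real.cos a ≠ 0 := mul_ne_zero (by norm_num) ha
  rw [add_assoc, ← add_div, ← eq_sub_iff_add_eq', div_eq_iff h4]
  linear_combination key

lemma idI4 {a t : ℝ} (ha : Real.cos a ≠ 0) :
    Real.sin (t-a) / (4 * Real.cos a) + Real.sin (2*π - 3*a - t) / (4 * Real.cos a)
      + 1/2 * Real.sin (t + 2*a) = 1/2 * Real.sin t := by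
  have key : Real.sin (t-a) + Real.sin (2*π - 3*a - t) + 2 * Real.cos a * Real.sin (t + 2*a)
      = 2 * Real.cos a * Real.sin t := by
    rw [show 2*π - 3*a - t = 2*π - (3*a+t) by ring, Real.sin_sub (2*π) (3*a+t),
      Real.sin_two_pi, Real.cos_two_pi,
      show (3:ℝ)*a = a+a+a by ring, show (2:ℝ)*a = a+a by ring]
    simp only [Real.sin_add, Real.cos_add, Real.sin_sub, Real.cos_sub]
    linear_combination (Real.cos a * Real.sin t + Real.sin a * Real.cos t) * Real.sin_sq_add_cos_sq a
  have h4 : (4:ℝ) * Real.cos a ≠ 0 := mul_ne_zero (by norm_num) ha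
  rw [← add_div, ← eq_sub_iff_add_eq, div_eq_iff h4]
  linear_combination key

/-! ### the key pointwise identity -/

lemma sum_ofReal_d {α : ℝ} (hα : α ∈ Set.Ioo 0 (π / 6)) {t : ℝ}
    (h0 : t ≠ 0) (h1 : t ≠ α) (h2 : t ≠ 2*α) (h3 : t ≠ 3*α)
    (h4 : t ≠ π - 3*α) (h5 : t ≠ π - 2*α) (h6 : t ≠ π - α) (h7 : t ≠ π) :
    ∑ i : Fin 4, ENNReal.ofReal (d α i t)
      = Set.indicator (Set.Icc 0 π) (fun s => ENNReal.ofReal (1/2 * Real.sin s)) t := by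
  obtain ⟨ha0, ha6⟩ := hα
  have hπ : (0:ℝ) < π := pi_pos
  have hca : (0:ℝ) < Real.cos α :=
    Real.cos_pos_of_mem_Ioo ⟨by linarith, by linarith⟩
  have hc2 : (0:ℝ) < Real.cos (2*α) :=
    Real.cos_pos_of_mem_Ioo ⟨by linarith, by linarith⟩
  have hca' : Real.cos α ≠ 0 := ne_of_gt hca
  have hc2' : Real.cos (2*α) ≠ 0 := ne_of_gt hc2
  have sinne : ∀ x:ℝ, 0 < x → x < π → Real.sin x ≠ 0 :=
    fun x hx1 hx2 => ne_of_gt (Real.sin_pos_of_pos_of_lt_pi hx1 hx2)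
  have sinnn : ∀ x:ℝ, 0 ≤ x → x ≤ π → 0 ≤ Real.sin x :=
    fun x hx1 hx2 => Real.sin_nonneg_of_nonneg_of_le_pi hx1 hx2
  rw [Fin.sum_univ_four]
  rcases lt_or_gt_of_ne h0 with c0 | c0
  · -- t < 0
    have e0 : d α 0 t = 0 := d_of_not_mem (by
      rw [Tinv0_def, Set.mem_Icc]; push_neg; intro h'; linarith)
    have e1 : d α 1 t = 0 := d_of_p_zero (by
      rw [Tinv1_def, p1_def, if_neg (by push_neg; linarith), if_neg (by push_neg; linarith),
        if_neg (by push_neg; linarith)])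
    have e2 : d α 2 t = 0 := d_of_p_zero (by
      rw [Tinv2_def, p2_def, if_pos (by linarith)])
    have e3 : d α 3 t = 0 := d_of_p_zero (by
      rw [Tinv3_def, p3_def, if_neg (by push_neg; linarith), if_neg (by push_neg; linarith),
        if_neg (by push_neg; linarith)])
    rw [e0, e1, e2, e3, Set.indicator_of_notMem (by
      rw [Set.mem_Icc]; push_neg; intro h'; linarith)]
    simp
  rcases lt_or_gt_of_ne h7 with c7 | c7
  swap
  · -- t > π
    have e0 : d α 0 t = 0 := d_of_p_zero (by
      rw [Tinv0_def, p0_def, if_neg (by push_neg; linarith), if_neg (by push_neg; linarith),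
        if_neg (by push_neg; linarith)])
    have e1 : d α 1 t = 0 := d_of_p_zero (by
      rw [Tinv1_def, p1_def, if_pos (by linarith)])
    have e2 : d α 2 t = 0 := d_of_not_mem (by
      rw [Tinv2_def, Set.mem_Icc]; push_neg; intro h'; linarith)
    have e3 : d α 3 t = 0 := d_of_not_mem (by
      rw [Tinv3_def, Set.mem_Icc]; push_neg; intro h'; linarith)
    rw [e0, e1, e2, e3, Set.indicator_of_notMem (by
      rw [Set.mem_Icc]; push_neg; intro h'; linarith)]
    simp
  have hmem : t ∈ Set.Icc 0 π := ⟨le_of_lt c0, le_of_lt c7⟩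
  rcases lt_or_gt_of_ne h1 with c1 | c1
  · -- 0 < t < α
    have e0 : d α 0 t = 0 := d_of_not_mem (by
      rw [Tinv0_def, Set.mem_Icc]; push_neg; intro h'; linarith)
    have e1 : d α 1 t = 0 := d_of_p_zero (by
      rw [Tinv1_def, p1_def, if_neg (by push_neg; linarith), if_neg (by push_neg; linarith),
        if_neg (by push_neg; linarith)])
    have e2 : d α 2 t = 1/2 * Real.sin t := by
      have hm : Tinv α 2 t ∈ Set.Icc 0 π := by
        rw [Tinv2_def, Set.mem_Icc]; constructor <;> linarith
      have hs : Real.sin (t + 2*α) ≠ 0 := sinne _ (by linarith) (by linarith)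
      rw [d_of_mem hm, Tinv2_def, p2_def, if_neg (by push_neg; linarith), if_pos (by linarith)]
      calc 1/2 * Real.sin (t+2*α) * (2*Real.cos (2*α) * u (2*α) (-(t+2*α)))
          = 1/2 * ((2*Real.cos (2*α) * u (2*α) (-(t+2*α))) * Real.sin (t+2*α)) := by ring
        _ = 1/2 * Real.sin ((t+2*α) - 2*α) := by rw [two_cos_u_neg_mul_sin hc2' hs]
        _ = 1/2 * Real.sin t := by rw [show t+2*α-2*α = t by ring]
    have e3 : d α 3 t = 0 := d_of_p_zero (by
      rw [Tinv3_def, p3_def, if_neg (by push_neg; linarith), if_neg (by push_neg; linarith),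
        if_neg (by push_neg; linarith)])
    rw [e0, e1, e2, e3, Set.indicator_of_mem hmem]
    simp
  rcases lt_or_gt_of_ne h2 with c2 | c2
  · -- α < t < 2α
    have e0 : d α 0 t = 0 := d_of_not_mem (by
      rw [Tinv0_def, Set.mem_Icc]; push_neg; intro h'; linarith)
    have e1 : d α 1 t = 0 := d_of_p_zero (by
      rw [Tinv1_def, p1_def, if_neg (by push_neg; linarith), if_neg (by push_neg; linarith),
        if_neg (by push_neg; linarith)])
    have e2 : d α 2 t = Real.sin (t+α) / (4*Real.cos α) := by
      have hm : Tinv α 2 t ∈ Set.Icc 0 π := by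
        rw [Tinv2_def, Set.mem_Icc]; constructor <;> linarith
      have hs : Real.sin (t + 2*α) ≠ 0 := sinne _ (by linarith) (by linarith)
      rw [d_of_mem hm, Tinv2_def, p2_def, if_neg (by push_neg; linarith),
        if_neg (by push_neg; linarith), if_pos (by linarith)]
      calc 1/2 * Real.sin (t+2*α) * u α (-(t+2*α))
          = 1/2 * (u α (-(t+2*α)) * Real.sin (t+2*α)) := by ring
        _ = 1/2 * (Real.sin ((t+2*α) - α) / (2*Real.cos α)) := by rw [u_neg_mul_sin hca' hs]
        _ = Real.sin (t+α) / (4*Real.cos α) := by rw [show t+2*α-α = t+α by ring]; ring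
    have e3 : d α 3 t = Real.sin (t-α) / (4*Real.cos α) := by
      have hm : Tinv α 3 t ∈ Set.Icc 0 π := by
        rw [Tinv3_def, Set.mem_Icc]; constructor <;> linarith
      have hs : Real.sin (-t + 4*α) ≠ 0 := sinne _ (by linarith) (by linarith)
      rw [d_of_mem hm, Tinv3_def, p3_def, if_neg (by push_neg; linarith),
        if_neg (by push_neg; linarith), if_pos (by linarith)]
      calc 1/2 * Real.sin (-t+4*α) * (u α (-(-t+4*α)) - 2*Real.cos (2*α) * u (2*α) (-(-t+4*α)))
          = 1/2 * ((u α (-(-t+4*α)) - 2*Real.cos (2*α) * u (2*α) (-(-t+4*α)))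
              * Real.sin (-t+4*α)) := by ring
        _ = 1/2 * (-Real.sin ((-t+4*α) - 3*α) / (2*Real.cos α)) := by
              rw [comb_neg_mul_sin hca' hc2' hs]
        _ = Real.sin (t-α) / (4*Real.cos α) := by
              rw [show (-t+4*α) - 3*α = -(t-α) by ring, Real.sin_neg]; ring
    have hv2 : 0 ≤ Real.sin (t+α) / (4*Real.cos α) :=
      div_nonneg (sinnn _ (by linarith) (by linarith)) (by linarith)
    have hv3 : 0 ≤ Real.sin (t-α) / (4*Real.cos α) :=
      div_nonneg (sinnn _ (by linarith) (by linarith)) (by linarith)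
    rw [e0, e1, e2, e3, Set.indicator_of_mem hmem]
    simp only [ENNReal.ofReal_zero, zero_add]
    rw [← ENNReal.ofReal_add hv2 hv3]
    exact congrArg ENNReal.ofReal (idI3a hca')
  rcases lt_or_gt_of_ne h3 with c3 | c3
  · -- 2α < t < 3α
    have e0 : d α 0 t = 1/2 * Real.sin (t - 2*α) := by
      have hm : Tinv α 0 t ∈ Set.Icc 0 π := by
        rw [Tinv0_def, Set.mem_Icc]; constructor <;> linarith
      rw [d_of_mem hm, Tinv0_def, p0_def, if_pos (by linarith), mul_one]
    have e1 : d α 1 t = 0 := d_of_p_zero (by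
      rw [Tinv1_def, p1_def, if_neg (by push_neg; linarith), if_neg (by push_neg; linarith),
        if_neg (by push_neg; linarith)])
    have e2 : d α 2 t = Real.sin (t+α) / (4*Real.cos α) := by
      have hm : Tinv α 2 t ∈ Set.Icc 0 π := by
        rw [Tinv2_def, Set.mem_Icc]; constructor <;> linarith
      have hs : Real.sin (t + 2*α) ≠ 0 := sinne _ (by linarith) (by linarith)
      rw [d_of_mem hm, Tinv2_def, p2_def, if_neg (by push_neg; linarith),
        if_neg (by push_neg; linarith), if_pos (by linarith)]
      calc 1/2 * Real.sin (t+2*α) * u α (-(t+2*α))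
          = 1/2 * (u α (-(t+2*α)) * Real.sin (t+2*α)) := by ring
        _ = 1/2 * (Real.sin ((t+2*α) - α) / (2*Real.cos α)) := by rw [u_neg_mul_sin hca' hs]
        _ = Real.sin (t+α) / (4*Real.cos α) := by rw [show t+2*α-α = t+α by ring]; ring
    have e3 : d α 3 t = Real.sin (3*α - t) / (4*Real.cos α) := by
      have hm : Tinv α 3 t ∈ Set.Icc 0 π := by
        rw [Tinv3_def, Set.mem_Icc]; constructor <;> linarith
      have hs : Real.sin (-t + 4*α) ≠ 0 := sinne _ (by linarith) (by linarith)
      rw [d_of_mem hm, Tinv3_def, p3_def, if_neg (by push_neg; linarith), if_pos (by linarith)]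
      calc 1/2 * Real.sin (-t+4*α) * u α (-(-t+4*α))
          = 1/2 * (u α (-(-t+4*α)) * Real.sin (-t+4*α)) := by ring
        _ = 1/2 * (Real.sin ((-t+4*α) - α) / (2*Real.cos α)) := by rw [u_neg_mul_sin hca' hs]
        _ = Real.sin (3*α - t) / (4*Real.cos α) := by
              rw [show (-t+4*α) - α = 3*α - t by ring]; ring
    have hv0 : 0 ≤ 1/2 * Real.sin (t - 2*α) := by
      have := sinnn (t - 2*α) (by linarith) (by linarith); linarith
    have hv2 : 0 ≤ Real.sin (t+α) / (4*Real.cos α) :=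
      div_nonneg (sinnn _ (by linarith) (by linarith)) (by linarith)
    have hv3 : 0 ≤ Real.sin (3*α - t) / (4*Real.cos α) :=
      div_nonneg (sinnn _ (by linarith) (by linarith)) (by linarith)
    rw [e0, e1, e2, e3, Set.indicator_of_mem hmem]
    simp only [ENNReal.ofReal_zero, zero_add, add_zero]
    rw [← ENNReal.ofReal_add hv0 hv2, ← ENNReal.ofReal_add (add_nonneg hv0 hv2) hv3]
    exact congrArg ENNReal.ofReal (idI2 hca')
  rcases lt_or_gt_of_ne h4 with c4 | c4
  · -- 3α < t < π - 3α
    have e0 : d α 0 t = Real.sin (t-α) / (4*Real.cos α) := by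
      have hm : Tinv α 0 t ∈ Set.Icc 0 π := by
        rw [Tinv0_def, Set.mem_Icc]; constructor <;> linarith
      have hs : Real.sin (t - 2*α) ≠ 0 := sinne _ (by linarith) (by linarith)
      rw [d_of_mem hm, Tinv0_def, p0_def, if_neg (by push_neg; linarith), if_pos (by linarith)]
      calc 1/2 * Real.sin (t-2*α) * u α (t-2*α)
          = 1/2 * (u α (t-2*α) * Real.sin (t-2*α)) := by ring
        _ = 1/2 * (Real.sin ((t-2*α) + α) / (2*Real.cos α)) := by rw [u_mul_sin hca' hs]
        _ = Real.sin (t-α) / (4*Real.cos α) := by rw [show t-2*α+α = t-α by ring]; ring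
    have e1 : d α 1 t = 0 := d_of_p_zero (by
      rw [Tinv1_def, p1_def, if_neg (by push_neg; linarith), if_neg (by push_neg; linarith),
        if_neg (by push_neg; linarith)])
    have e2 : d α 2 t = Real.sin (t+α) / (4*Real.cos α) := by
      have hm : Tinv α 2 t ∈ Set.Icc 0 π := by
        rw [Tinv2_def, Set.mem_Icc]; constructor <;> linarith
      have hs : Real.sin (t + 2*α) ≠ 0 := sinne _ (by linarith) (by linarith)
      rw [d_of_mem hm, Tinv2_def, p2_def, if_neg (by push_neg; linarith),
        if_neg (by push_neg; linarith), if_pos (by linarith)]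
      calc 1/2 * Real.sin (t+2*α) * u α (-(t+2*α))
          = 1/2 * (u α (-(t+2*α)) * Real.sin (t+2*α)) := by ring
        _ = 1/2 * (Real.sin ((t+2*α) - α) / (2*Real.cos α)) := by rw [u_neg_mul_sin hca' hs]
        _ = Real.sin (t+α) / (4*Real.cos α) := by rw [show t+2*α-α = t+α by ring]; ring
    have e3 : d α 3 t = 0 := d_of_p_zero (by
      rw [Tinv3_def, p3_def, if_pos (by linarith)])
    have hv0 : 0 ≤ Real.sin (t-α) / (4*Real.cos α) :=
      div_nonneg (sinnn _ (by linarith) (by linarith)) (by linarith)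
    have hv2 : 0 ≤ Real.sin (t+α) / (4*Real.cos α) :=
      div_nonneg (sinnn _ (by linarith) (by linarith)) (by linarith)
    rw [e0, e1, e2, e3, Set.indicator_of_mem hmem]
    simp only [ENNReal.ofReal_zero, zero_add, add_zero]
    rw [← ENNReal.ofReal_add hv0 hv2]
    exact congrArg ENNReal.ofReal (idI3b hca')
  rcases lt_or_gt_of_ne h5 with c5 | c5
  · -- π - 3α < t < π - 2α
    have e0 : d α 0 t = Real.sin (t-α) / (4*Real.cos α) := by
      have hm : Tinv α 0 t ∈ Set.Icc 0 π := by
        rw [Tinv0_def, Set.mem_Icc]; constructor <;> linarith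
      have hs : Real.sin (t - 2*α) ≠ 0 := sinne _ (by linarith) (by linarith)
      rw [d_of_mem hm, Tinv0_def, p0_def, if_neg (by push_neg; linarith), if_pos (by linarith)]
      calc 1/2 * Real.sin (t-2*α) * u α (t-2*α)
          = 1/2 * (u α (t-2*α) * Real.sin (t-2*α)) := by ring
        _ = 1/2 * (Real.sin ((t-2*α) + α) / (2*Real.cos α)) := by rw [u_mul_sin hca' hs]
        _ = Real.sin (t-α) / (4*Real.cos α) := by rw [show t-2*α+α = t-α by ring]; ring
    have e1 : d α 1 t = Real.sin (2*π - 3*α - t) / (4*Real.cos α) := by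
      have hm : Tinv α 1 t ∈ Set.Icc 0 π := by
        rw [Tinv1_def, Set.mem_Icc]; constructor <;> linarith
      have hs : Real.sin (-t + 2*π - 4*α) ≠ 0 := sinne _ (by linarith) (by linarith)
      rw [d_of_mem hm, Tinv1_def, p1_def, if_neg (by push_neg; linarith),
        if_neg (by push_neg; linarith), if_pos (by linarith)]
      calc 1/2 * Real.sin (-t+2*π-4*α) * u α (-t+2*π-4*α)
          = 1/2 * (u α (-t+2*π-4*α) * Real.sin (-t+2*π-4*α)) := by ring
        _ = 1/2 * (Real.sin ((-t+2*π-4*α) + α) / (2*Real.cos α)) := by rw [u_mul_sin hca' hs]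
        _ = Real.sin (2*π - 3*α - t) / (4*Real.cos α) := by
              rw [show (-t+2*π-4*α) + α = 2*π - 3*α - t by ring]; ring
    have e2 : d α 2 t = 1/2 * Real.sin (t + 2*α) := by
      have hm : Tinv α 2 t ∈ Set.Icc 0 π := by
        rw [Tinv2_def, Set.mem_Icc]; constructor <;> linarith
      rw [d_of_mem hm, Tinv2_def, p2_def, if_neg (by push_neg; linarith),
        if_neg (by push_neg; linarith), if_neg (by push_neg; linarith), mul_one]
    have e3 : d α 3 t = 0 := d_of_p_zero (by
      rw [Tinv3_def, p3_def, if_pos (by linarith)])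
    have hv0 : 0 ≤ Real.sin (t-α) / (4*Real.cos α) :=
      div_nonneg (sinnn _ (by linarith) (by linarith)) (by linarith)
    have hv1 : 0 ≤ Real.sin (2*π - 3*α - t) / (4*Real.cos α) :=
      div_nonneg (sinnn _ (by linarith) (by linarith)) (by linarith)
    have hv2 : 0 ≤ 1/2 * Real.sin (t + 2*α) := by
      have := sinnn (t + 2*α) (by linarith) (by linarith); linarith
    rw [e0, e1, e2, e3, Set.indicator_of_mem hmem]
    simp only [ENNReal.ofReal_zero, zero_add, add_zero]
    rw [← ENNReal.ofReal_add hv0 hv1, ← ENNReal.ofReal_add (add_nonneg hv0 hv1) hv2]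
    exact congrArg ENNReal.ofReal (idI4 hca')
  rcases lt_or_gt_of_ne h6 with c6 | c6
  · -- π - 2α < t < π - α
    have e0 : d α 0 t = Real.sin (t-α) / (4*Real.cos α) := by
      have hm : Tinv α 0 t ∈ Set.Icc 0 π := by
        rw [Tinv0_def, Set.mem_Icc]; constructor <;> linarith
      have hs : Real.sin (t - 2*α) ≠ 0 := sinne _ (by linarith) (by linarith)
      rw [d_of_mem hm, Tinv0_def, p0_def, if_neg (by push_neg; linarith), if_pos (by linarith)]
      calc 1/2 * Real.sin (t-2*α) * u α (t-2*α)
          = 1/2 * (u α (t-2*α) * Real.sin (t-2*α)) := by ring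
        _ = 1/2 * (Real.sin ((t-2*α) + α) / (2*Real.cos α)) := by rw [u_mul_sin hca' hs]
        _ = Real.sin (t-α) / (4*Real.cos α) := by rw [show t-2*α+α = t-α by ring]; ring
    have e1 : d α 1 t = Real.sin (t+α) / (4*Real.cos α) := by
      have hm : Tinv α 1 t ∈ Set.Icc 0 π := by
        rw [Tinv1_def, Set.mem_Icc]; constructor <;> linarith
      have hs : Real.sin (-t + 2*π - 4*α) ≠ 0 := sinne _ (by linarith) (by linarith)
      have hrw : Real.sin ((-t+2*π-4*α) + 3*α) = -Real.sin (t+α) := by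
        rw [show (-t+2*π-4*α) + 3*α = 2*π - (t+α) by ring, Real.sin_sub (2*π) (t+α),
          Real.sin_two_pi, Real.cos_two_pi]; ring
      rw [d_of_mem hm, Tinv1_def, p1_def, if_neg (by push_neg; linarith), if_pos (by linarith)]
      calc 1/2 * Real.sin (-t+2*π-4*α)
              * (u α (-t+2*π-4*α) - 2*Real.cos (2*α) * u (2*α) (-t+2*π-4*α))
          = 1/2 * ((u α (-t+2*π-4*α) - 2*Real.cos (2*α) * u (2*α) (-t+2*π-4*α))
              * Real.sin (-t+2*π-4*α)) := by ring
        _ = 1/2 * (-Real.sin ((-t+2*π-4*α) + 3*α) / (2*Real.cos α)) := by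
              rw [comb_mul_sin hca' hc2' hs]
        _ = Real.sin (t+α) / (4*Real.cos α) := by rw [hrw]; ring
    have e2 : d α 2 t = 0 := d_of_not_mem (by
      rw [Tinv2_def, Set.mem_Icc]; push_neg; intro h'; linarith)
    have e3 : d α 3 t = 0 := d_of_p_zero (by
      rw [Tinv3_def, p3_def, if_pos (by linarith)])
    have hv0 : 0 ≤ Real.sin (t-α) / (4*Real.cos α) :=
      div_nonneg (sinnn _ (by linarith) (by linarith)) (by linarith)
    have hv1 : 0 ≤ Real.sin (t+α) / (4*Real.cos α) :=
      div_nonneg (sinnn _ (by linarith) (by linarith)) (by linarith)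
    rw [e0, e1, e2, e3, Set.indicator_of_mem hmem]
    simp only [ENNReal.ofReal_zero, zero_add, add_zero]
    rw [← ENNReal.ofReal_add hv0 hv1]
    exact congrArg ENNReal.ofReal (idI3b hca')
  · -- π - α < t < π
    have e0 : d α 0 t = 1/2 * Real.sin t := by
      have hm : Tinv α 0 t ∈ Set.Icc 0 π := by
        rw [Tinv0_def, Set.mem_Icc]; constructor <;> linarith
      have hs : Real.sin (t - 2*α) ≠ 0 := sinne _ (by linarith) (by linarith)
      rw [d_of_mem hm, Tinv0_def, p0_def, if_neg (by push_neg; linarith),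
        if_neg (by push_neg; linarith), if_pos (by linarith)]
      calc 1/2 * Real.sin (t-2*α) * (2*Real.cos (2*α) * u (2*α) (t-2*α))
          = 1/2 * ((2*Real.cos (2*α) * u (2*α) (t-2*α)) * Real.sin (t-2*α)) := by ring
        _ = 1/2 * Real.sin ((t-2*α) + 2*α) := by rw [two_cos_u_mul_sin hc2' hs]
        _ = 1/2 * Real.sin t := by rw [show t-2*α+2*α = t by ring]
    have e1 : d α 1 t = 0 := d_of_p_zero (by
      rw [Tinv1_def, p1_def, if_pos (by linarith)])
    have e2 : d α 2 t = 0 := d_of_not_mem (by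
      rw [Tinv2_def, Set.mem_Icc]; push_neg; intro h'; linarith)
    have e3 : d α 3 t = 0 := d_of_p_zero (by
      rw [Tinv3_def, p3_def, if_pos (by linarith)])
    rw [e0, e1, e2, e3, Set.indicator_of_mem hmem]
    simp



/-! ### measurability and measure-preservation -/

lemma measurable_tan' : Measurable Real.tan := by
  have : Real.tan = fun x => Real.sin x / Real.cos x := funext Real.tan_eq_sin_div_cos
  rw [this]
  exact Real.measurable_sin.div Real.measurable_cos

lemma measurable_u (a : ℝ) : Measurable (u a) :=
  ((measurable_const.div measurable_tan').const_add 1).const_mul (1/2)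

lemma measurable_u_neg (a : ℝ) : Measurable (fun θ : ℝ => u a (-θ)) :=
  (measurable_u a).comp measurable_neg

lemma measurable_p (α : ℝ) (i : Fin 4) : Measurable (p α i) := by
  have hite : ∀ (c : ℝ) (f g : ℝ → ℝ), Measurable f → Measurable g →
      Measurable (fun θ => if θ < c then f θ else g θ) := fun c f g hf hg =>
    Measurable.ite (measurableSet_lt measurable_id measurable_const) hf hg
  fin_cases i
  · exact hite α _ _ measurable_const (hite (π - 3*α) _ _ (measurable_u α)
      (hite (π - 2*α) _ _ ((measurable_u (2*α)).const_mul _) measurable_const))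
  · exact hite (π - 3*α) _ _ measurable_const (hite (π - 2*α) _ _
      ((measurable_u α).sub ((measurable_u (2*α)).const_mul _))
      (hite (π - α) _ _ (measurable_u α) measurable_const))
  · exact hite (2*α) _ _ measurable_const (hite (3*α) _ _
      ((measurable_u_neg (2*α)).const_mul _)
      (hite (π - α) _ _ (measurable_u_neg α) measurable_const))
  · exact hite α _ _ measurable_const (hite (2*α) _ _ (measurable_u_neg α)
      (hite (3*α) _ _ ((measurable_u_neg α).sub ((measurable_u_neg (2*α)).const_mul _))
      measurable_const))

lemma measurable_T (α : ℝ) (i : Fin 4) : Measurable (T α i) := by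
  fin_cases i <;> simp only [T] <;> fun_prop

lemma measurable_Tinv (α : ℝ) (i : Fin 4) : Measurable (Tinv α i) := by
  fin_cases i <;> simp only [Tinv] <;> fun_prop

lemma measurable_d (α : ℝ) (i : Fin 4) : Measurable (d α i) := by
  have h := measurable_Tinv α i
  exact Measurable.ite (h measurableSet_Icc)
    (((Real.measurable_sin.comp h).const_mul (1/2)).mul ((measurable_p α i).comp h))
    measurable_const

lemma T_Tinv (α : ℝ) (i : Fin 4) (t : ℝ) : T α i (Tinv α i t) = t := by
  fin_cases i
  · show (t - 2*α) + 2*α = t; ring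
  · show -(-t + 2*π - 4*α) + 2*π - 4*α = t; ring
  · show (t + 2*α) - 2*α = t; ring
  · show -(-t + 4*α) + 4*α = t; ring

lemma mp_Tinv (α : ℝ) (i : Fin 4) :
    MeasurePreserving (Tinv α i) (volume : Measure ℝ) volume := by
  fin_cases i
  · have h := measurePreserving_add_right (volume : Measure ℝ) (-(2*α))
    have e : (fun t : ℝ => t + -(2*α)) = fun t : ℝ => t - 2*α := by funext t; ring
    rw [e] at h
    exact h
  · have h := (measurePreserving_add_right (volume : Measure ℝ) (2*π - 4*α)).comp
      (Measure.measurePreserving_neg (volume : Measure ℝ))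
    have e : ((fun t : ℝ => t + (2*π - 4*α)) ∘ fun t : ℝ => -t)
        = fun t : ℝ => -t + 2*π - 4*α := by funext t; simp; ring
    rw [e] at h
    exact h
  · exact measurePreserving_add_right (volume : Measure ℝ) (2*α)
  · have h := (measurePreserving_add_right (volume : Measure ℝ) (4*α)).comp
      (Measure.measurePreserving_neg (volume : Measure ℝ))
    have e : ((fun t : ℝ => t + 4*α) ∘ fun t : ℝ => -t)
        = fun t : ℝ => -t + 4*α := by funext t; simp
    rw [e] at h
    exact h

/-! ### the one-step invariance of `mu0` -/

lemma step_eq {α : ℝ} (hα : α ∈ Set.Ioo 0 (π / 6)) {g : ℝ → ℝ≥0∞} (hg : Measurable g) :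
    ∑ i : Fin 4, ∫⁻ θ, g (T α i θ) * ENNReal.ofReal (p α i θ) ∂mu0 = ∫⁻ θ, g θ ∂mu0 := by
  have hdens : Measurable fun θ : ℝ => ENNReal.ofReal (1/2 * Real.sin θ) :=
    (Real.measurable_sin.const_mul (1/2)).ennreal_ofReal
  have key : ∀ i : Fin 4, ∫⁻ θ, g (T α i θ) * ENNReal.ofReal (p α i θ) ∂mu0
      = ∫⁻ s, g s * ENNReal.ofReal (d α i s) := by
    intro i
    have hf : Measurable fun θ => g (T α i θ) * ENNReal.ofReal (p α i θ) :=
      (hg.comp (measurable_T α i)).mul ((measurable_p α i).ennreal_ofReal)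
    have hind : Measurable (Set.indicator (Set.Icc 0 π)
        ((fun θ => ENNReal.ofReal (1/2 * Real.sin θ))
          * fun θ => g (T α i θ) * ENNReal.ofReal (p α i θ))) :=
      (hdens.mul hf).indicator measurableSet_Icc
    rw [mu0, lintegral_withDensity_eq_lintegral_mul _ hdens hf,
      ← lintegral_indicator measurableSet_Icc,
      ← (mp_Tinv α i).lintegral_comp hind]
    refine lintegral_congr fun s => ?_
    by_cases hm : Tinv α i s ∈ Set.Icc 0 π
    · rw [Set.indicator_of_mem hm, Pi.mul_apply, d, if_pos hm, T_Tinv]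
      have hhalf : (0:ℝ) ≤ 1/2 * Real.sin (Tinv α i s) := by
        have := Real.sin_nonneg_of_nonneg_of_le_pi hm.1 hm.2
        linarith
      rw [ENNReal.ofReal_mul hhalf]
      ring
    · rw [Set.indicator_of_notMem hm, d, if_neg hm]
      simp
  calc ∑ i : Fin 4, ∫⁻ θ, g (T α i θ) * ENNReal.ofReal (p α i θ) ∂mu0
      = ∑ i : Fin 4, ∫⁻ s, g s * ENNReal.ofReal (d α i s) :=
        Finset.sum_congr rfl fun i _ => key i
    _ = ∫⁻ s, ∑ i : Fin 4, g s * ENNReal.ofReal (d α i s) :=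
        (lintegral_finset_sum _ fun i _ => hg.mul (measurable_d α i).ennreal_ofReal).symm
    _ = ∫⁻ s, g s * ∑ i : Fin 4, ENNReal.ofReal (d α i s) :=
        lintegral_congr fun s => (Finset.mul_sum _ _ _).symm
    _ = ∫⁻ s, g s * Set.indicator (Set.Icc 0 π)
          (fun x => ENNReal.ofReal (1/2 * Real.sin x)) s := by
        refine lintegral_congr_ae ?_
        have hS : (volume : Measure ℝ) ({0, α, 2*α, 3*α, π - 3*α, π - 2*α, π - α, π} : Set ℝ)
            = 0 := (Set.toFinite _).measure_zero _
        filter_upwards [measure_eq_zero_iff_ae_notMem.mp hS] with s hs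
        simp only [Set.mem_insert_iff, Set.mem_singleton_iff, not_or] at hs
        obtain ⟨n0, n1, n2, n3, n4, n5, n6, n7⟩ := hs
        rw [sum_ofReal_d hα n0 n1 n2 n3 n4 n5 n6 n7]
    _ = ∫⁻ s, Set.indicator (Set.Icc 0 π)
          (fun x => ENNReal.ofReal (1/2 * Real.sin x) * g x) s := by
        refine lintegral_congr fun s => ?_
        by_cases hs : s ∈ Set.Icc 0 π
        · rw [Set.indicator_of_mem hs, Set.indicator_of_mem hs, mul_comm]
        · rw [Set.indicator_of_notMem hs, Set.indicator_of_notMem hs, mul_zero]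
    _ = ∫⁻ θ, g θ ∂mu0 := by
        rw [mu0, lintegral_withDensity_eq_lintegral_mul _ hdens hg,
          ← lintegral_indicator measurableSet_Icc]
        exact lintegral_congr fun s => rfl

def phi (α : ℝ) (E : Set (ℝ × ℝ)) (i : Fin 4) : ℝ × ℝ → ℝ≥0∞ :=
  fun q => Set.indicator E (fun _ => (1:ℝ≥0∞)) (q.1, T α i q.2) * ENNReal.ofReal (p α i q.2)

lemma measurable_phi (α : ℝ) {E : Set (ℝ × ℝ)} (hE : MeasurableSet E) (i : Fin 4) :
    Measurable (phi α E i) :=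
  ((measurable_one.indicator hE).comp
      (measurable_fst.prodMk ((measurable_T α i).comp measurable_snd))).mul
    (((measurable_p α i).comp measurable_snd).ennreal_ofReal)



end RandomBilliard

open RandomBilliard

/-- if the deterministic billiard map `F(s, θ) = (s₁(s,θ), θ₁(s,θ))`
preserves `λ × μ`, then `λ × μ` is invariant for the random billiard map
`F̄(s, θ) = (s₁(s,θ), T_i(θ₁(s,θ)))` with probability `p_i(θ₁(s,θ))`. -/
theorem prod_measure_invariant_for_Tbar_comp_F (α : ℝ) (hα : α ∈ Set.Ioo 0 (π / 6))
    (L : ℝ) (hL : 0 < L) (lam : Measure ℝ)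
    (hlam : lam = (ENNReal.ofReal L)⁻¹ • volume.restrict (Set.Icc 0 L))
    (F : ℝ × ℝ → ℝ × ℝ)
    (hF : MeasurePreserving F (lam.prod mu0) (lam.prod mu0))
    (hFrange : ∀ q ∈ Set.Icc 0 L ×ˢ Set.Icc 0 π, F q ∈ Set.Icc 0 L ×ˢ Set.Icc 0 π)
    (E : Set (ℝ × ℝ)) (hE : MeasurableSet E)
    (hEsub : E ⊆ Set.Icc 0 L ×ˢ Set.Icc 0 π) :
    (lam.prod mu0) E =
      ∑ i : Fin 4, ∫⁻ θ, (∫⁻ s,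
        Set.indicator E (fun _ => (1 : ℝ≥0∞)) ((F (s, θ)).1, T α i (F (s, θ)).2) *
          ENNReal.ofReal (p α i (F (s, θ)).2) ∂lam) ∂mu0 := by
  haveI hsf : SFinite mu0 := by unfold mu0; infer_instance
  haveI hsl : SFinite lam := by rw [hlam]; infer_instance
  have hphi : ∀ i : Fin 4, Measurable (phi α E i) := measurable_phi α hE
  have main : ∀ i : Fin 4,
      (∫⁻ θ, ∫⁻ s, phi α E i (F (s, θ)) ∂lam ∂mu0)
        = ∫⁻ s, ∫⁻ θ, phi α E i (s, θ) ∂mu0 ∂lam := by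
    intro i
    calc ∫⁻ θ, ∫⁻ s, phi α E i (F (s, θ)) ∂lam ∂mu0
        = ∫⁻ s, ∫⁻ θ, phi α E i (F (s, θ)) ∂mu0 ∂lam :=
          lintegral_lintegral_swap
            ((((hphi i).comp hF.measurable).comp measurable_swap).aemeasurable)
      _ = ∫⁻ q, phi α E i (F q) ∂(lam.prod mu0) :=
          (lintegral_prod _ (((hphi i).comp hF.measurable).aemeasurable)).symm
      _ = ∫⁻ q, phi α E i q ∂(lam.prod mu0) := hF.lintegral_comp (hphi i)
      _ = ∫⁻ s, ∫⁻ θ, phi α E i (s, θ) ∂mu0 ∂lam := lintegral_prod _ (hphi i).aemeasurable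
  symm
  calc ∑ i : Fin 4, ∫⁻ θ, (∫⁻ s,
        Set.indicator E (fun _ => (1 : ℝ≥0∞)) ((F (s, θ)).1, T α i (F (s, θ)).2) *
          ENNReal.ofReal (p α i (F (s, θ)).2) ∂lam) ∂mu0
      = ∑ i : Fin 4, ∫⁻ s, ∫⁻ θ, phi α E i (s, θ) ∂mu0 ∂lam :=
        Finset.sum_congr rfl fun i _ => by simpa only [phi] using main i
    _ = ∫⁻ s, ∑ i : Fin 4, ∫⁻ θ, phi α E i (s, θ) ∂mu0 ∂lam :=
        (lintegral_finset_sum _ fun i _ =>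
          Measurable.lintegral_prod_right (f := fun s θ => phi α E i (s, θ)) (hphi i)).symm
    _ = ∫⁻ s, ∫⁻ θ, Set.indicator E (fun _ => (1 : ℝ≥0∞)) (s, θ) ∂mu0 ∂lam :=
        lintegral_congr fun s => by
          simpa only [phi] using step_eq hα
            (g := fun t => Set.indicator E (fun _ => (1 : ℝ≥0∞)) (s, t))
            ((measurable_one.indicator hE).comp measurable_prodMk_left)
    _ = ∫⁻ q, Set.indicator E (fun _ => (1 : ℝ≥0∞)) q ∂(lam.prod mu0) :=
        (lintegral_prod _ (measurable_one.indicator hE).aemeasurable).symm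
    _ = (lam.prod mu0) E := lintegral_indicator_one hE
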